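/- Let S be a finite set, α > 0, π_pre and p* probability distributions on S with full support, and π a probability distribution on S with full support. Define Ω_π(x) = (1/α)·log π(x) + (1 − 1/α)·log π_pre(x). If for all x_A, x_B ∈ S, σ(log p*(x_A) − log p*(x_B)) = σ(Ω_π(x_A) − Ω_π(x_B)), then there exists c > 0 such that π(x) = c · π_pre(x)^{1−α} · p*(x)^{α} for all x ∈ S. -/

import Mathlib

noncomputable def sigm (t : ℝ) : ℝ := 1 / (1 + Real.exp (-t))

lemma sigm_inj : Function.Injective sigm := by
  intro a b hab
  unfold sigm at hab
  field_simp at hab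
  exact neg_injective (Real.exp_injective (add_left_cancel hab.symm))

theorem stmt_8 {S : Type*} [Fintype S] [Nonempty S]
    (α : ℝ) (hα : 0 < α)
    (πpre pstar π : S → ℝ)
    (hprepos : ∀ x, 0 < πpre x) (hpresum : ∑ x, πpre x = 1)
    (hppos : ∀ x, 0 < pstar x) (hpsum : ∑ x, pstar x = 1)
    (hπpos : ∀ x, 0 < π x) (hπsum : ∑ x, π x = 1)
    (h : ∀ xA xB : S,
      sigm (Real.log (pstar xA) - Real.log (pstar xB)) =
      sigm (((1 / α) * Real.log (π xA) + (1 - 1 / α) * Real.log (πpre xA)) -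
            ((1 / α) * Real.log (π xB) + (1 - 1 / α) * Real.log (πpre xB)))) :
    ∃ c : ℝ, 0 < c ∧ ∀ x : S, π x = c * πpre x ^ (1 - α) * pstar x ^ α := by
  obtain ⟨x0⟩ := ‹Nonempty S›
  set C : ℝ := Real.log (π x0) - α * Real.log (pstar x0) - (1 - α) * Real.log (πpre x0)
    with hC
  refine ⟨Real.exp C, Real.exp_pos C, fun x => ?_⟩
  have key := sigm_inj (h x x0)
  have hαne : α ≠ 0 := ne_of_gt hα
  have hlog : Real.log (π x) = α * Real.log (pstar x) + (1 - α) * Real.log (πpre x) + C := by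
    field_simp at key ⊢
    nlinarith [key]
  have : π x = Real.exp (Real.log (π x)) := (Real.exp_log (hπpos x)).symm
  rw [this, hlog, Real.exp_add, Real.exp_add,
    show πpre x ^ (1 - α) = Real.exp ((1 - α) * Real.log (πpre x)) by
      rw [Real.rpow_def_of_pos (hprepos x), mul_comm],
    show pstar x ^ α = Real.exp (α * Real.log (pstar x)) by
      rw [Real.rpow_def_of_pos (hppos x), mul_comm]]
  ring
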